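/- Let P be a polynomial in n complex variables that is affine in x_n, written P = P⁰ + x_n P¹ with P⁰, P¹ polynomials in x_1,…,x_{n−1}. If P is nonvanishing on H^n, P⁰ is not identically zero, and P¹ is not identically zero, then Re(P⁰(y)/P¹(y)) ≥ 0 for all y ∈ H^{n−1}. -/

import Mathlib

theorem stmt7 {n : ℕ} (P0 P1 : MvPolynomial (Fin n) ℂ)
    (hP : ∀ x : Fin (n + 1) → ℂ, (∀ i, 0 < (x i).re) →
      MvPolynomial.eval x
        (MvPolynomial.rename Fin.castSucc P0 +
          MvPolynomial.X (Fin.last n) * MvPolynomial.rename Fin.castSucc P1) ≠ 0)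
    (h0 : P0 ≠ 0) (h1 : P1 ≠ 0) :
    ∀ y : Fin n → ℂ, (∀ i, 0 < (y i).re) →
      0 ≤ (MvPolynomial.eval y P0 / MvPolynomial.eval y P1).re := by
  intro y hy
  set A := MvPolynomial.eval y P0 with hA
  set B := MvPolynomial.eval y P1 with hB
  by_cases hBz : B = 0
  · simp [hBz]
  · by_contra hneg
    push_neg at hneg
    set x : Fin (n + 1) → ℂ := Fin.snoc y (-(A / B)) with hx
    have hxpos : ∀ i, 0 < (x i).re := by
      intro i
      refine Fin.lastCases ?_ ?_ i
      · simp only [hx, Fin.snoc_last, Complex.neg_re]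
        linarith
      · intro j
        simpa [hx, Fin.snoc_castSucc] using hy j
    apply hP x hxpos
    have hcomp : x ∘ Fin.castSucc = y := by
      funext j; simp [hx, Fin.snoc_castSucc]
    simp only [map_add, map_mul, MvPolynomial.eval_rename, MvPolynomial.eval_X, hcomp,
      hx, Fin.snoc_last, Fin.snoc_comp_castSucc, ← hA, ← hB]
    field_simp
    ring
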